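/- Let M1 = {(x^(k), p^(k))}_{k∈{0,...,K}} be a 0-reducible RochetNet menu with witness set K1 (0 ∈ K1, and with F-probability 1 the buyer's selected option lies in K1). Let φ1 : {0,...,K} → K1 be any map with φ1(k) = k for all k ∈ K1, and define the menu M̂1 whose k-th option is (x^(φ1(k)), p^(φ1(k))). Then for every λ ∈ [0,1], the convex combination M = λ M1 + (1−λ) M̂1 satisfies Rev(M) ≥ Rev(M1). -/
import Mathlib


open MeasureTheory Finset

namespace RN

/-- A RochetNet menu: for each of the `K+1` option indices, an allocation in `[0,1]^n`
and a price. -/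
abbrev Menu (n K : ℕ) := Fin (K + 1) → (Fin n → ℝ) × ℝ

/-- Inner product of a valuation and an allocation. -/
def dotp {n : ℕ} (v x : Fin n → ℝ) : ℝ := ∑ j, v j * x j

/-- A valid menu: allocations in `[0,1]^n`, nonnegative prices, default option `(0,0)`. -/
def IsMenu {n K : ℕ} (M : Menu n K) : Prop :=
  (∀ k j, 0 ≤ (M k).1 j ∧ (M k).1 j ≤ 1) ∧ (∀ k, 0 ≤ (M k).2) ∧ M 0 = 0

/-- Utility of option `k` for valuation `v`. -/
def util {n K : ℕ} (M : Menu n K) (v : Fin n → ℝ) (k : Fin (K + 1)) : ℝ :=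
  dotp v (M k).1 - (M k).2

/-- Price extracted at valuation `v`: the maximal price among utility-maximizing options. -/
noncomputable def price {n K : ℕ} (M : Menu n K) (v : Fin n → ℝ) : ℝ :=
  sSup {p : ℝ | ∃ k, (∀ k', util M v k' ≤ util M v k) ∧ p = (M k).2}

/-- Option `k` is the buyer's selected option at `v`: it maximizes utility and, among
utility maximizers, has maximal price. -/
def Selected {n K : ℕ} (M : Menu n K) (v : Fin n → ℝ) (k : Fin (K + 1)) : Prop :=
  (∀ k', util M v k' ≤ util M v k) ∧ (M k).2 = price M v

/-- The set of valuations. -/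
def V (n : ℕ) : Set (Fin n → ℝ) :=
  {v | (∀ j, 0 ≤ v j ∧ v j ≤ 1) ∧ ∑ j, v j ≤ 1}

/-- Expected revenue of menu `M` under valuation distribution `F`. -/
noncomputable def Rev {n K : ℕ} (F : Measure (Fin n → ℝ)) (M : Menu n K) : ℝ :=
  ∫ v, price M v ∂F

/-- Option-wise convex combination `lam • M + (1 - lam) • M'` of two menus. -/
noncomputable def comb {n K : ℕ} (lam : ℝ) (M M' : Menu n K) : Menu n K :=
  fun k => (fun j => lam * (M k).1 j + (1 - lam) * (M' k).1 j,
            lam * (M k).2 + (1 - lam) * (M' k).2)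

/-- `M` is `ε`-reducible: some subset `K'` of options containing the default option, of
cardinality at most `√(K+1)`, contains the buyer's selected option with probability
at least `1 - ε`. -/
def Reducible {n K : ℕ} (F : Measure (Fin n → ℝ)) (M : Menu n K) (ε : ℝ) : Prop :=
  ∃ K' : Finset (Fin (K + 1)), 0 ∈ K' ∧ (K'.card : ℝ) ≤ Real.sqrt (K + 1) ∧
    (F {v | ∃ k ∈ K', Selected M v k}).toReal ≥ 1 - ε

/-- `M₁` and `M₂` are `ε`-mode-connected by a piecewise linear path with `pieces` linear
pieces, all whose menus are valid and have revenue at least `min (Rev M₁) (Rev M₂) - ε`. -/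
def PLConnected {n K : ℕ} (F : Measure (Fin n → ℝ)) (M₁ M₂ : Menu n K) (ε : ℝ)
    (pieces : ℕ) : Prop :=
  ∃ P : Fin (pieces + 1) → Menu n K, P 0 = M₁ ∧ P (Fin.last pieces) = M₂ ∧
    (∀ i, IsMenu (P i)) ∧
    ∀ i : Fin pieces, ∀ lam ∈ Set.Icc (0 : ℝ) 1,
      Rev F (comb lam (P i.castSucc) (P i.succ)) ≥ min (Rev F M₁) (Rev F M₂) - ε

variable {n K : ℕ}

/-- The set of achievable prices at `v`. -/
def Tset (M : Menu n K) (v : Fin n → ℝ) : Set ℝ :=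
  {p : ℝ | ∃ k, (∀ k', util M v k' ≤ util M v k) ∧ p = (M k).2}

lemma Tset_bddAbove (M : Menu n K) (v : Fin n → ℝ) : BddAbove (Tset M v) := by
  apply (Set.finite_range (fun k => (M k).2)).bddAbove.mono
  rintro p ⟨k, _, rfl⟩
  exact ⟨k, rfl⟩

lemma Tset_nonempty (M : Menu n K) (v : Fin n → ℝ) : (Tset M v).Nonempty := by
  obtain ⟨k, hk⟩ := Finite.exists_max (fun k => util M v k)
  exact ⟨(M k).2, k, hk, rfl⟩

lemma le_price (M : Menu n K) (v : Fin n → ℝ) {k : Fin (K + 1)}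
    (hk : ∀ k', util M v k' ≤ util M v k) : (M k).2 ≤ price M v :=
  le_csSup (Tset_bddAbove M v) ⟨k, hk, rfl⟩

lemma price_le (M : Menu n K) (v : Fin n → ℝ) {B : ℝ} (hB : ∀ k, (M k).2 ≤ B) :
    price M v ≤ B := by
  apply csSup_le (Tset_nonempty M v)
  rintro p ⟨k, _, rfl⟩
  exact hB k

lemma price_nonneg (M : Menu n K) (hp : ∀ k, 0 ≤ (M k).2) (v : Fin n → ℝ) :
    0 ≤ price M v := by
  obtain ⟨k, hk⟩ := Finite.exists_max (fun k => util M v k)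
  exact (hp k).trans (le_price M v hk)

lemma measurable_util (M : Menu n K) (k : Fin (K + 1)) :
    Measurable (fun v => util M v k) := by
  unfold util dotp
  exact (Finset.measurable_sum _ (fun j _ =>
    (measurable_pi_apply j).mul_const _)).sub measurable_const

lemma measurableSet_maximizer (M : Menu n K) (k : Fin (K + 1)) :
    MeasurableSet {v : Fin n → ℝ | ∀ k', util M v k' ≤ util M v k} := by
  have : {v : Fin n → ℝ | ∀ k', util M v k' ≤ util M v k} =
      ⋂ k', {v | util M v k' ≤ util M v k} := by
    ext v; simp [Set.mem_iInter]
  rw [this]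
  exact MeasurableSet.iInter fun k' =>
    measurableSet_le (measurable_util M k') (measurable_util M k)

open Classical in
lemma price_eq (M : Menu n K) (hp : ∀ k, 0 ≤ (M k).2) (v : Fin n → ℝ) :
    price M v = Finset.univ.sup' Finset.univ_nonempty
      (fun k => fun v => if (∀ k', util M v k' ≤ util M v k) then (M k).2 else 0) v := by
  rw [Finset.sup'_apply]
  apply le_antisymm
  · apply csSup_le (Tset_nonempty M v)
    rintro p ⟨k, hk, rfl⟩
    calc (M k).2 = if (∀ k', util M v k' ≤ util M v k) then (M k).2 else 0 := by
          rw [if_pos hk]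
      _ ≤ _ := Finset.le_sup' (f := fun a => if (∀ k', util M v k' ≤ util M v a) then (M a).2 else 0) (Finset.mem_univ k)
  · apply Finset.sup'_le
    intro k _
    by_cases hk : ∀ k', util M v k' ≤ util M v k
    · rw [if_pos hk]; exact le_price M v hk
    · rw [if_neg hk]; exact price_nonneg M hp v

lemma measurable_price (M : Menu n K) (hp : ∀ k, 0 ≤ (M k).2) :
    Measurable (fun v => price M v) := by
  classical
  have : (fun v => price M v) = Finset.univ.sup' Finset.univ_nonempty
      (fun k => fun v => if (∀ k', util M v k' ≤ util M v k) then (M k).2 else 0) := by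
    funext v; exact price_eq M hp v
  rw [this]
  exact Finset.measurable_sup' _ fun k _ =>
    Measurable.ite (measurableSet_maximizer M k) measurable_const measurable_const

lemma integrable_price (F : Measure (Fin n → ℝ)) [IsProbabilityMeasure F]
    (M : Menu n K) (hp : ∀ k, 0 ≤ (M k).2) :
    Integrable (fun v => price M v) F := by
  obtain ⟨B, hB⟩ := Finite.exists_max (fun k => (M k).2)
  refine (integrable_const ((M B).2)).mono' (measurable_price M hp).aestronglyMeasurable ?_
  refine ae_of_all _ fun v => ?_
  rw [Real.norm_eq_abs, abs_of_nonneg (price_nonneg M hp v)]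
  exact price_le M v hB

/-- Let `M₁` be a `0`-reducible menu with witness set `K₁` (containing
the default option, and with probability `1` the selected option lies in `K₁`).  Let
`φ₁ : {0,…,K} → K₁` be any map fixing `K₁` pointwise, and let `M̂₁` be the menu whose
`k`-th option is the `φ₁ k`-th option of `M₁`.  Then every convex combination of `M₁`
and `M̂₁` has revenue at least `Rev M₁`. -/
theorem statement2 {n K : ℕ} (F : Measure (Fin n → ℝ)) [IsProbabilityMeasure F]
    (hFV : F (V n) = 1) (M₁ : Menu n K) (hM₁ : IsMenu M₁)
    (K₁ : Finset (Fin (K + 1))) (h0 : 0 ∈ K₁)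
    (hsel : F {v | ∃ k ∈ K₁, Selected M₁ v k} = 1)
    (φ₁ : Fin (K + 1) → Fin (K + 1)) (hφmem : ∀ k, φ₁ k ∈ K₁)
    (hφid : ∀ k ∈ K₁, φ₁ k = k) :
    ∀ lam ∈ Set.Icc (0 : ℝ) 1,
      Rev F (comb lam M₁ (fun k => M₁ (φ₁ k))) ≥ Rev F M₁ := by
  rintro lam ⟨hlam0, hlam1⟩
  set M : Menu n K := comb lam M₁ (fun k => M₁ (φ₁ k)) with hMdef
  have hp₁ : ∀ k, 0 ≤ (M₁ k).2 := hM₁.2.1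
  have hpM : ∀ k, 0 ≤ (M k).2 := fun k =>
    add_nonneg (mul_nonneg hlam0 (hp₁ k)) (mul_nonneg (by linarith) (hp₁ (φ₁ k)))
  have hutil : ∀ v k, util M v k = lam * util M₁ v k + (1 - lam) * util M₁ v (φ₁ k) := by
    intro v k
    have hsum : ∑ j, v j * (lam * (M₁ k).1 j + (1 - lam) * (M₁ (φ₁ k)).1 j)
        = lam * ∑ j, v j * (M₁ k).1 j + (1 - lam) * ∑ j, v j * (M₁ (φ₁ k)).1 j := by
      rw [Finset.mul_sum, Finset.mul_sum, ← Finset.sum_add_distrib]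
      exact Finset.sum_congr rfl fun j _ => by ring
    show (∑ j, v j * (lam * (M₁ k).1 j + (1 - lam) * (M₁ (φ₁ k)).1 j))
        - (lam * (M₁ k).2 + (1 - lam) * (M₁ (φ₁ k)).2) = _
    rw [hsum]; unfold util dotp; ring
  have hpt : ∀ v, (∃ k ∈ K₁, Selected M₁ v k) → price M₁ v ≤ price M v := by
    rintro v ⟨k, hkK, hmax, hpr⟩
    have hmaxM : ∀ k', util M v k' ≤ util M v k := by
      intro k'
      rw [hutil v k', hutil v k, hφid k hkK]
      have h2 : (1 - lam) * util M₁ v (φ₁ k') ≤ (1 - lam) * util M₁ v k :=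
        mul_le_mul_of_nonneg_left (hmax (φ₁ k')) (by linarith)
      have h1 : lam * util M₁ v k' ≤ lam * util M₁ v k :=
        mul_le_mul_of_nonneg_left (hmax k') hlam0
      linarith
    have hkey : (M k).2 ≤ price M v := le_price M v hmaxM
    rw [← hpr]
    calc (M₁ k).2 = (M k).2 := by
          show (M₁ k).2 = lam * (M₁ k).2 + (1 - lam) * (M₁ (φ₁ k)).2
          rw [hφid k hkK]; ring
      _ ≤ price M v := hkey
  have hmeas_sel : MeasurableSet {v : Fin n → ℝ | ∃ k ∈ K₁, Selected M₁ v k} := by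
    have h : {v : Fin n → ℝ | ∃ k ∈ K₁, Selected M₁ v k} =
        ⋃ k ∈ K₁, {v | Selected M₁ v k} := by
      ext v; simp [Set.mem_iUnion]
    rw [h]
    refine MeasurableSet.biUnion K₁.countable_toSet fun k _ => ?_
    exact (measurableSet_maximizer M₁ k).inter
      (measurableSet_eq_fun measurable_const (measurable_price M₁ hp₁))
  have hcompl : F {v : Fin n → ℝ | ∃ k ∈ K₁, Selected M₁ v k}ᶜ = 0 := by
    rw [measure_compl hmeas_sel (measure_ne_top _ _), hsel, measure_univ]
    simp
  have hae : ∀ᵐ v ∂F, price M₁ v ≤ price M v := by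
    rw [ae_iff]
    refine measure_mono_null ?_ hcompl
    intro v hv hmem
    exact hv (hpt v hmem)
  exact integral_mono_ae (integrable_price F M₁ hp₁) (integrable_price F M hpM) hae

end RN
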